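/- If λ ∈ Γ_k (the Gårding cone) and 1 ≤ i ≤ n, then σ_{k-1}(λ|i) > 0, i.e., the partial derivative ∂σ_k/∂λᵢ is positive on Γ_k. -/

import Mathlib

/-- The k-th elementary symmetric polynomial of `lam : Fin n → ℝ`. -/
noncomputable def sigmaE (n k : ℕ) (lam : Fin n → ℝ) : ℝ :=
  ∑ s ∈ Finset.powersetCard k (Finset.univ : Finset (Fin n)), ∏ i ∈ s, lam i

/-- The k-th elementary symmetric polynomial of the variables with `lam i` deleted. -/
noncomputable def sigmaE1 (n k : ℕ) (lam : Fin n → ℝ) (i : Fin n) : ℝ :=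
  ∑ s ∈ Finset.powersetCard k ((Finset.univ : Finset (Fin n)).erase i), ∏ j ∈ s, lam j

/-- The Gårding cone `Γ_k`. -/
def GammaCone (n k : ℕ) : Set (Fin n → ℝ) :=
  {lam | ∀ j, 1 ≤ j → j ≤ k → 0 < sigmaE n j lam}


open Polynomial



lemma rootcount_step (p : ℝ[X]) (hp : Multiset.card p.roots = p.natDegree) :
    Multiset.card (derivative p).roots = (derivative p).natDegree ∧
      (derivative p).natDegree = p.natDegree - 1 := by
  rcases Nat.eq_zero_or_pos p.natDegree with h0 | h1
  · obtain ⟨a, rfl⟩ := Polynomial.natDegree_eq_zero.mp h0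
    simp
  · have c1 := p.card_roots_le_derivative
    have c2 := (derivative p).card_roots'
    have c3 := p.natDegree_derivative_le
    omega

lemma rootcount_iter (p : ℝ[X]) (hp : Multiset.card p.roots = p.natDegree) (j : ℕ) :
    Multiset.card (derivative^[j] p).roots = (derivative^[j] p).natDegree ∧
      (derivative^[j] p).natDegree = p.natDegree - j := by
  induction j with
  | zero => simpa using hp
  | succ j ih =>
    rw [Function.iterate_succ_apply']
    obtain ⟨h1, h2⟩ := ih
    obtain ⟨h3, h4⟩ := rootcount_step _ h1
    exact ⟨h3, by omega⟩

lemma eval_deriv_prod_pos (R : Multiset ℝ) (hne : R ≠ 0) (t : ℝ)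
    (hR : ∀ r ∈ R, r < t) :
    0 < Polynomial.eval t (derivative (R.map (fun a => X - C a)).prod) := by
  classical
  rw [derivative_prod]
  rw [show Polynomial.eval t = Polynomial.evalRingHom t from rfl, map_multiset_sum, Multiset.map_map]
  have hpos : ∀ x ∈ R.map (fun a => Polynomial.eval t
      ((Multiset.map (fun b => X - C b) (R.erase a)).prod * derivative (X - C a))), 0 < x := by
    intro x hx
    obtain ⟨a, ha, rfl⟩ := Multiset.mem_map.mp hx
    rw [derivative_sub, derivative_X, derivative_C, sub_zero, mul_one]
    rw [show Polynomial.eval t = Polynomial.evalRingHom t from rfl, map_multiset_prod, Multiset.map_map]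
    apply Multiset.prod_pos
    intro y hy
    obtain ⟨b, hb, rfl⟩ := Multiset.mem_map.mp hy
    simp only [Function.comp_apply, coe_evalRingHom, eval_sub, eval_X, eval_C]
    exact sub_pos.mpr (hR b (Multiset.mem_of_mem_erase hb))
  obtain ⟨a, ha⟩ := Multiset.exists_mem_of_ne_zero hne
  obtain ⟨S, rfl⟩ := Multiset.exists_cons_of_mem ha
  rw [Multiset.map_cons, Multiset.sum_cons]
  have h1 : 0 < Polynomial.eval t ((Multiset.map (fun b => X - C b)
      ((a ::ₘ S).erase a)).prod * derivative (X - C a)) := by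
    apply hpos
    exact Multiset.mem_map_of_mem _ (Multiset.mem_cons_self a S)
  have h2 : 0 ≤ (Multiset.map (fun a' => Polynomial.eval t
      ((Multiset.map (fun b => X - C b) ((a ::ₘ S).erase a')).prod * derivative (X - C a'))) S).sum := by
    apply Multiset.sum_nonneg
    intro x hx
    obtain ⟨b, hb, rfl⟩ := Multiset.mem_map.mp hx
    exact le_of_lt (hpos _ (Multiset.mem_map_of_mem _ (Multiset.mem_cons_of_mem hb)))
  simp only [Function.comp_apply, coe_evalRingHom] at h1 h2 ⊢
  linarith


lemma iter_deriv_add (m : ℕ) (A B : ℝ[X]) :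
    derivative^[m] (A + B) = derivative^[m] A + derivative^[m] B := by
  induction m generalizing A B with
  | zero => simp
  | succ m ih => rw [Function.iterate_succ_apply, derivative_add, ih,
      ← Function.iterate_succ_apply, ← Function.iterate_succ_apply]

lemma leib (a : ℝ) (m : ℕ) (Q : ℝ[X]) :
    derivative^[m] ((X + C a) * Q)
      = (X + C a) * derivative^[m] Q + m • derivative^[m - 1] Q := by
  induction m generalizing Q with
  | zero => simp
  | succ m ih =>
    rw [Function.iterate_succ_apply, derivative_mul]
    simp only [derivative_add, derivative_X, derivative_C, add_zero, one_mul]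
    rw [iter_deriv_add, ih (derivative Q)]
    have h1 : derivative^[m] (derivative Q) = derivative^[m + 1] Q :=
      (Function.iterate_succ_apply derivative m Q).symm
    have h2 : m • derivative^[m - 1] (derivative Q) = m • derivative^[m] Q := by
      rcases Nat.eq_zero_or_pos m with h0 | h0
      · simp [h0]
      · congr 1
        rw [← Function.iterate_succ_apply derivative (m - 1) Q]
        congr 1
        omega
    rw [h2, h1, Nat.succ_sub_one, succ_nsmul]
    simp only [nsmul_eq_mul]
    ring

section helpers
variable (n k : ℕ) (lam : Fin n → ℝ) (i : Fin n)

lemma coeffP (j : ℕ) (hj : j ≤ n) :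
    (∏ j : Fin n, (X + C (lam j))).coeff (n - j) = sigmaE n j lam := by
  have hcard : (Finset.univ : Finset (Fin n)).card = n := by simp
  have h := Finset.prod_X_add_C_coeff (Finset.univ : Finset (Fin n)) lam
    (k := n - j) (by rw [hcard]; omega)
  rw [h, sigmaE]
  congr 1
  rw [hcard]
  congr 1
  omega

lemma coeffQ (j : ℕ) (hj : j ≤ n - 1) (hn : 1 ≤ n) :
    (∏ j ∈ Finset.univ.erase i, (X + C (lam j))).coeff (n - 1 - j) = sigmaE1 n j lam i := by
  have hcard : ((Finset.univ : Finset (Fin n)).erase i).card = n - 1 := by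
    rw [Finset.card_erase_of_mem (Finset.mem_univ i)]; simp
  have h := Finset.prod_X_add_C_coeff ((Finset.univ : Finset (Fin n)).erase i) lam
    (k := n - 1 - j) (by rw [hcard]; omega)
  rw [h, sigmaE1]
  congr 1
  rw [hcard]
  congr 1
  omega

end helpers

lemma prodMonic (n : ℕ) (lam : Fin n → ℝ) (s : Finset (Fin n)) :
    (∏ j ∈ s, (X + C (lam j))).Monic :=
  monic_prod_of_monic _ _ (fun j _ => monic_X_add_C _)

lemma prodDeg (n : ℕ) (lam : Fin n → ℝ) (s : Finset (Fin n)) :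
    (∏ j ∈ s, (X + C (lam j))).natDegree = s.card := by
  rw [natDegree_prod]
  · simp [natDegree_X_add_C]
  · exact fun j _ => (monic_X_add_C _).ne_zero

lemma claim1 (n k : ℕ) (hk1 : 1 ≤ k) (hkn : k ≤ n) (lam : Fin n → ℝ)
    (hlam : lam ∈ GammaCone n k) (t : ℝ) (ht : 0 ≤ t) :
    0 < (hasseDeriv (n - k) (∏ j : Fin n, (X + C (lam j)))).eval t := by
  set P := ∏ j : Fin n, (X + C (lam j)) with hPdef
  have hdeg : P.natDegree = n := by rw [hPdef, prodDeg]; simp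
  have hmonic : P.Monic := prodMonic n lam _
  have hfdeg : (hasseDeriv (n - k) P).natDegree < k + 1 := by
    have := natDegree_hasseDeriv_le P (n - k)
    omega
  rw [eval_eq_sum_range' hfdeg]
  apply Finset.sum_pos'
  · intro d hd
    rw [Finset.mem_range] at hd
    rw [hasseDeriv_coeff]
    rcases eq_or_lt_of_le (Nat.lt_succ_iff.mp hd) with hdk | hdk
    · have h1 : d + (n - k) = n := by omega
      rw [h1, show P.coeff n = 1 from hdeg ▸ hmonic.coeff_natDegree]
      have := pow_nonneg ht d
      positivity
    · have h1 : d + (n - k) = n - (k - d) := by omega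
      rw [h1, coeffP n lam (k - d) (by omega)]
      have h2 := hlam (k - d) (by omega) (by omega)
      exact mul_nonneg (mul_nonneg (Nat.cast_nonneg _) h2.le) (pow_nonneg ht d)
  · refine ⟨0, Finset.mem_range.mpr (by omega), ?_⟩
    rw [hasseDeriv_coeff, show 0 + (n - k) = n - k from by omega,
      coeffP n lam k hkn]
    have h2 := hlam k hk1 le_rfl
    rw [Nat.choose_self]
    simpa using h2

theorem stmt3 (n k : ℕ) (hk1 : 1 ≤ k) (hkn : k ≤ n) (lam : Fin n → ℝ)
    (hlam : lam ∈ GammaCone n k) (i : Fin n) :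
    0 < sigmaE1 n (k - 1) lam i := by
  classical
  rcases eq_or_lt_of_le hk1 with h1 | hk2
  · rw [← h1]
    simp [sigmaE1]
  set P := ∏ j : Fin n, (X + C (lam j)) with hPdef
  set Q := ∏ j ∈ Finset.univ.erase i, (X + C (lam j)) with hQdefn
  have hPQ : P = (X + C (lam i)) * Q := (Finset.mul_prod_erase _ _ (Finset.mem_univ i)).symm
  have hQmonic : Q.Monic := prodMonic n lam _
  have hcardE : ((Finset.univ : Finset (Fin n)).erase i).card = n - 1 := by
    rw [Finset.card_erase_of_mem (Finset.mem_univ i)]; simp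
  have hQdeg : Q.natDegree = n - 1 := by rw [hQdefn, prodDeg, hcardE]
  have hn2 : 2 ≤ n := le_trans hk2 hkn
  have hQroots : Multiset.card Q.roots = n - 1 := by
    rw [hQdefn, roots_prod _ _ (prodMonic n lam _).ne_zero, Multiset.card_bind]
    have hone : ∀ j : Fin n, Multiset.card ((X + C (lam j)).roots) = 1 := by
      intro j
      rw [show X + C (lam j) = X - C (-(lam j)) by simp, roots_X_sub_C]
      simp
    have hfn : (Multiset.card ∘ fun j : Fin n => (X + C (lam j)).roots) = fun _ => 1 :=
      funext (fun j => hone j)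
    rw [hfn]
    simp [hcardE]
  rcases eq_or_lt_of_le hkn with hkn' | hklt
  · -- k = n
    have hall : ∀ j, 0 < lam j := by
      intro j
      by_contra hj
      push_neg at hj
      have hpos := claim1 n k hk1 hkn lam hlam (-lam j) (by linarith)
      rw [show n - k = 0 from by omega] at hpos
      have hzero : P.eval (-lam j) = 0 := by
        rw [hPdef, eval_prod]
        apply Finset.prod_eq_zero (Finset.mem_univ j)
        simp
      rw [hasseDeriv_zero] at hpos
      simp only [LinearMap.id_coe, id_eq] at hpos
      rw [hzero] at hpos
      exact lt_irrefl 0 hpos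
    rw [sigmaE1, show k - 1 = ((Finset.univ : Finset (Fin n)).erase i).card from by omega,
      Finset.powersetCard_self, Finset.sum_singleton]
    exact Finset.prod_pos (fun j _ => hall j)
  -- now k < n
  by_contra hcon
  push_neg at hcon
  set m := n - k with hmdef
  have hm1 : 1 ≤ m := by omega
  set f := hasseDeriv m P with hfdef
  set g := hasseDeriv m Q with hgdef
  set h := hasseDeriv (m - 1) Q with hhdef
  have hg0 : g.eval 0 ≤ 0 := by
    rw [← coeff_zero_eq_eval_zero, hgdef, hasseDeriv_coeff,
      show 0 + m = n - 1 - (k - 1) from by omega, coeffQ n lam i (k - 1) (by omega) (by omega),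
      show n - 1 - (k - 1) = m from by omega, Nat.choose_self]
    simpa using hcon
  have hQrd : Multiset.card Q.roots = Q.natDegree := by rw [hQroots, hQdeg]
  -- transfer facts for g
  have hgC : derivative^[m] Q = C ((m.factorial : ℝ)) * g := by
    have := congrFun (Polynomial.factorial_smul_hasseDeriv (R := ℝ) m) Q
    rw [← this]
    simp [nsmul_eq_mul]
    exact Or.inl rfl
  have hgiter := rootcount_iter Q hQrd m
  have hgdeg : g.natDegree = k - 1 := by
    have hne : ((m.factorial : ℝ)) ≠ 0 := by positivity
    have := hgiter.2
    rw [hgC, natDegree_C_mul hne, hQdeg] at this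
    omega
  have hgroots : Multiset.card g.roots = k - 1 := by
    have hne : ((m.factorial : ℝ)) ≠ 0 := by positivity
    have := hgiter.1
    rw [hgC, roots_C_mul _ hne, natDegree_C_mul hne, hgdeg] at this
    omega
  have hgne : g ≠ 0 := by
    intro h0
    rw [h0, natDegree_zero] at hgdeg
    omega
  have hglc : 0 < g.leadingCoeff := by
    rw [Polynomial.leadingCoeff, hgdeg, hgdef, hasseDeriv_coeff,
      show k - 1 + m = n - 1 from by omega,
      show Q.coeff (n - 1) = 1 from hQdeg ▸ hQmonic.coeff_natDegree]
    rw [mul_one]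
    exact_mod_cast Nat.choose_pos (by omega)
  -- transfer facts for h
  have hhC : derivative^[m - 1] Q = C (((m - 1).factorial : ℝ)) * h := by
    have := congrFun (Polynomial.factorial_smul_hasseDeriv (R := ℝ) (m - 1)) Q
    rw [← this]
    simp [nsmul_eq_mul]
    exact Or.inl rfl
  have hhiter := rootcount_iter Q hQrd (m - 1)
  have hhdeg : h.natDegree = k := by
    have hne : (((m - 1).factorial : ℝ)) ≠ 0 := by positivity
    have := hhiter.2
    rw [hhC, natDegree_C_mul hne, hQdeg] at this
    omega
  have hhroots : Multiset.card h.roots = k := by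
    have hne : (((m - 1).factorial : ℝ)) ≠ 0 := by positivity
    have := hhiter.1
    rw [hhC, roots_C_mul _ hne, natDegree_C_mul hne, hhdeg] at this
    omega
  have hhne : h ≠ 0 := by
    intro h0
    rw [h0, natDegree_zero] at hhdeg
    omega
  -- derivative of h
  have hdh : derivative h = m • g := by
    have h3 := congrFun (congrArg DFunLike.coe (Polynomial.hasseDeriv_comp (R := ℝ) 1 (m - 1))) Q
    simp only [LinearMap.comp_apply, LinearMap.smul_apply] at h3
    rw [show 1 + (m - 1) = m from by omega, Nat.choose_one_right] at h3
    calc derivative h = hasseDeriv 1 (hasseDeriv (m - 1) Q) := by rw [hasseDeriv_one]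
    _ = m • g := h3
  -- identity f = (X + C (lam i)) * g + h
  have hfgh : f = (X + C (lam i)) * g + h := by
    have hfC : derivative^[m] P = C ((m.factorial : ℝ)) * f := by
      have := congrFun (Polynomial.factorial_smul_hasseDeriv (R := ℝ) m) P
      rw [← this]
      simp [nsmul_eq_mul]
      exact Or.inl rfl
    have hl := leib (lam i) m Q
    rw [← hPQ] at hl
    rw [hfC, hgC, hhC] at hl
    have hmm : (m : ℝ) * ((m - 1).factorial : ℝ) = (m.factorial : ℝ) := by
      rw [← Nat.cast_mul]
      exact_mod_cast congrArg (Nat.cast : ℕ → ℝ) (Nat.mul_factorial_pred (by omega))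
    have hsm : (m • (C (((m - 1).factorial : ℝ)) * h) : ℝ[X])
        = C ((m.factorial : ℝ)) * h := by
      rw [nsmul_eq_mul, ← Polynomial.C_eq_natCast, ← mul_assoc, ← C_mul, hmm]
    rw [hsm] at hl
    have hl2 : C ((m.factorial : ℝ)) * f
        = C ((m.factorial : ℝ)) * ((X + C (lam i)) * g + h) := by
      rw [hl]; ring
    have hne : ((m.factorial : ℝ)) ≠ 0 := by positivity
    exact mul_left_cancel₀ (by simpa using hne) hl2
  -- find a nonnegative root of g
  have htend : Filter.Tendsto (fun x => g.eval x) Filter.atTop Filter.atTop := by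
    apply tendsto_atTop_of_leadingCoeff_nonneg
    · exact natDegree_pos_iff_degree_pos.mp (by omega)
    · exact hglc.le
  have hT : ∀ y : ℝ, ∃ T, y < T ∧ 0 < g.eval T := by
    intro y
    have := (htend.eventually_gt_atTop 0).and (Filter.eventually_gt_atTop y)
    obtain ⟨T, hT1, hT2⟩ := this.exists
    exact ⟨T, hT2, hT1⟩
  obtain ⟨T, hT0, hgT⟩ := hT 0
  have hcont : Continuous fun x => g.eval x := Polynomial.continuous g
  obtain ⟨c, hcmem, hgc⟩ := intermediate_value_Icc hT0.le (hcont.continuousOn)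
    (Set.mem_Icc.mpr ⟨hg0, hgT.le⟩)
  have hcroot : c ∈ g.roots.toFinset := by
    rw [Multiset.mem_toFinset, mem_roots']
    exact ⟨hgne, hgc⟩
  set t₀ := g.roots.toFinset.max' ⟨c, hcroot⟩ with ht₀def
  have hmax : ∀ s : ℝ, g.eval s = 0 → s ≤ t₀ := by
    intro s hs
    apply Finset.le_max'
    rw [Multiset.mem_toFinset, mem_roots']
    exact ⟨hgne, hs⟩
  have ht₀0 : 0 ≤ t₀ := le_trans hcmem.1 (hmax c hgc)
  have hgt₀ : g.eval t₀ = 0 := by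
    have := g.roots.toFinset.max'_mem ⟨c, hcroot⟩
    rw [Multiset.mem_toFinset, mem_roots'] at this
    exact this.2
  have gpos : ∀ t, t₀ < t → 0 < g.eval t := by
    intro t ht
    rcases lt_trichotomy (g.eval t) 0 with hneg | h0 | hposi
    · obtain ⟨T', hT'1, hT'2⟩ := hT t
      obtain ⟨c', hc'mem, hgc'⟩ := intermediate_value_Icc hT'1.le (hcont.continuousOn)
        (Set.mem_Icc.mpr ⟨hneg.le, hT'2.le⟩)
      have := hmax c' hgc'
      have := hc'mem.1
      linarith
    · have := hmax t h0
      linarith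
    · exact hposi
  have hft₀ : 0 < f.eval t₀ := claim1 n k hk1 hkn lam hlam t₀ ht₀0
  have hht₀ : 0 < h.eval t₀ := by
    have := congrArg (fun p => Polynomial.eval t₀ p) hfgh
    simp only [eval_add, eval_mul, hgt₀, mul_zero, zero_add] at this
    linarith
  have hmono : StrictMonoOn (fun s => h.eval s) (Set.Ici t₀) := by
    apply strictMonoOn_of_deriv_pos (convex_Ici t₀) ((Polynomial.continuous h).continuousOn)
    intro x hx
    rw [interior_Ici] at hx
    rw [Polynomial.deriv, hdh]
    have : Polynomial.eval x (m • g) = (m : ℝ) * g.eval x := by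
      simp [nsmul_eq_mul]
    rw [this]
    have := gpos x hx
    have hm : (0 : ℝ) < m := by exact_mod_cast hm1
    positivity
  have hrootlt : ∀ r ∈ h.roots, r < t₀ := by
    intro r hr
    rw [mem_roots'] at hr
    by_contra hge
    push_neg at hge
    have hz : Polynomial.eval r h = 0 := hr.2
    rcases eq_or_lt_of_le hge with heq | hlt
    · rw [← heq] at hz
      linarith
    · have h5 := hmono Set.self_mem_Ici (Set.mem_Ici.mpr hge) hlt
      simp only at h5
      linarith
  have hfact := C_leadingCoeff_mul_prod_multiset_X_sub_C (p := h) (by rw [hhroots, hhdeg])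
  have hRne : h.roots ≠ 0 := by
    intro h0
    rw [h0] at hhroots
    simp at hhroots
    omega
  have hdpos := eval_deriv_prod_pos h.roots hRne t₀ hrootlt
  have e1 : Polynomial.eval t₀ (derivative h) = 0 := by
    rw [hdh]
    simp [nsmul_eq_mul, hgt₀]
  have e2 : Polynomial.eval t₀ (derivative h)
      = h.leadingCoeff * Polynomial.eval t₀ (derivative ((h.roots.map (fun a => X - C a)).prod)) := by
    conv_lhs => rw [← hfact]
    rw [derivative_C_mul, eval_C_mul]
  rw [e1] at e2
  have hlcne : h.leadingCoeff ≠ 0 := leadingCoeff_ne_zero.mpr hhne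
  exact absurd e2.symm (mul_ne_zero hlcne hdpos.ne')
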